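/- Let q ∈ C¹[0,π], h ∈ ℝ, and let φ(·,λ) solve −y''+qy = λy with φ(0,λ) = h₁ − λ, φ'(0,λ) = h₂ − λh. Write λ = s². Then φ(x,λ) = −s²cos(sx) − (h + (1/2)∫_0^x q(t)dt)·s·sin(sx) + O(e^{|Im s| x}) uniformly for x ∈ [0,π] as |s| → ∞. -/

import Mathlib

open Real Complex intervalIntegral Set

lemma abs_sin_le' (z : ℂ) : ‖Complex.sin z‖ ≤ Real.exp |z.im| := by
  have h1 : ‖Complex.exp (-z * Complex.I)‖ ≤ Real.exp |z.im| := by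
    rw [Complex.norm_exp]
    apply Real.exp_le_exp.2
    first
    | simpa using neg_le_abs z.im
    | simpa using le_abs_self z.im
  have h2 : ‖Complex.exp (z * Complex.I)‖ ≤ Real.exp |z.im| := by
    rw [Complex.norm_exp]
    apply Real.exp_le_exp.2
    first
    | simpa using neg_le_abs z.im
    | simpa using le_abs_self z.im
  have : Complex.sin z = (Complex.exp (-z * Complex.I) - Complex.exp (z * Complex.I)) * Complex.I / 2 := rfl
  rw [this, norm_div, norm_mul]
  simp only [Complex.norm_I, mul_one, Complex.norm_two]
  rw [div_le_iff₀ (by norm_num)]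
  calc ‖Complex.exp (-z * Complex.I) - Complex.exp (z * Complex.I)‖
      ≤ _ + _ := by
        simpa using norm_sub_le (Complex.exp (-z*Complex.I)) (Complex.exp (z*Complex.I))
    _ ≤ Real.exp |z.im| + Real.exp |z.im| := add_le_add h1 h2
    _ = Real.exp |z.im| * 2 := by ring

lemma abs_cos_le' (z : ℂ) : ‖Complex.cos z‖ ≤ Real.exp |z.im| := by
  have h1 : ‖Complex.exp (-z * Complex.I)‖ ≤ Real.exp |z.im| := by
    rw [Complex.norm_exp]; apply Real.exp_le_exp.2; first
    | simpa using neg_le_abs z.im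
    | simpa using le_abs_self z.im
  have h2 : ‖Complex.exp (z * Complex.I)‖ ≤ Real.exp |z.im| := by
    rw [Complex.norm_exp]; apply Real.exp_le_exp.2; first
    | simpa using neg_le_abs z.im
    | simpa using le_abs_self z.im
  have : Complex.cos z = (Complex.exp (z * Complex.I) + Complex.exp (-z * Complex.I)) / 2 := rfl
  rw [this, norm_div]
  simp only [Complex.norm_two]
  rw [div_le_iff₀ (by norm_num)]
  calc ‖Complex.exp (z * Complex.I) + Complex.exp (-z * Complex.I)‖
      ≤ _ + _ := by
        simpa using norm_add_le (Complex.exp (z*Complex.I)) (Complex.exp (-z*Complex.I))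
    _ ≤ Real.exp |z.im| + Real.exp |z.im| := add_le_add h2 h1
    _ = Real.exp |z.im| * 2 := by ring

lemma primitive_hasDerivAt {f : ℝ → ℂ} (hf : Continuous f) (x : ℝ) :
    HasDerivAt (fun u => ∫ t in (0:ℝ)..u, f t) (f x) x :=
  intervalIntegral.integral_hasDerivAt_right (hf.intervalIntegrable _ _)
    (hf.stronglyMeasurableAtFilter _ _) hf.continuousAt


lemma primitive_hasDerivAt_real {f : ℝ → ℝ} (hf : Continuous f) (x : ℝ) :
    HasDerivAt (fun u => ∫ t in (0:ℝ)..u, f t) (f x) x :=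
  intervalIntegral.integral_hasDerivAt_right (hf.intervalIntegrable _ _)
    (hf.stronglyMeasurableAtFilter _ _) hf.continuousAt

lemma ext_lemma (q : ℝ → ℝ) (hq : ContDiffOn ℝ 1 q (Set.Icc 0 Real.pi)) :
    ∃ qe qd : ℝ → ℝ, Continuous qd ∧ (∀ x, HasDerivAt qe (qd x) x) ∧
      ∀ x ∈ Set.Icc 0 Real.pi, qe x = q x := by
  set K := Set.Icc (0:ℝ) Real.pi with hK
  have hUD : UniqueDiffOn ℝ K := uniqueDiffOn_Icc Real.pi_pos
  set q₁ := derivWithin q K with hq₁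
  have hq1cont : ContinuousOn q₁ K := hq.continuousOn_derivWithin hUD le_rfl
  have hqd : ∀ x ∈ K, HasDerivWithinAt q (q₁ x) K x := fun x hx =>
    ((hq.differentiableOn one_ne_zero) x hx).hasDerivWithinAt
  set c : ℝ → ℝ := fun x => max 0 (min x Real.pi) with hc
  have hccont : Continuous c := continuous_const.max (continuous_id.min continuous_const)
  have hcmaps : ∀ x, c x ∈ K := fun x =>
    ⟨le_max_left _ _, max_le Real.pi_pos.le (min_le_right _ _)⟩
  have hcid : ∀ x ∈ K, c x = x := by
    intro x hx
    simp only [hc]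
    rw [min_eq_left hx.2, max_eq_right hx.1]
  set qd : ℝ → ℝ := fun x => q₁ (c x) with hqdc
  have hqdcont : Continuous qd := hq1cont.comp_continuous hccont hcmaps
  set qe : ℝ → ℝ := fun x => q 0 + ∫ t in (0:ℝ)..x, qd t with hqe
  have hqederiv : ∀ x, HasDerivAt qe (qd x) x := fun x => by
    simpa [hqe] using (primitive_hasDerivAt_real hqdcont x).const_add (q 0)
  refine ⟨qe, qd, hqdcont, hqederiv, ?_⟩
  have h0 : (0:ℝ) ∈ K := ⟨le_refl _, Real.pi_pos.le⟩
  refine eq_of_has_deriv_right_eq (f' := qd)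
    (fun x hx => (hqederiv x).hasDerivWithinAt) ?_
    (fun x _ => (hqederiv x).continuousAt.continuousWithinAt) hq.continuousOn ?_
  · intro x hx
    have hxK : x ∈ K := ⟨hx.1, hx.2.le⟩
    have : HasDerivWithinAt q (q₁ x) K x := hqd x hxK
    have h2 : HasDerivWithinAt q (q₁ x) (Set.Ici x) x :=
      this.mono_of_mem_nhdsWithin (Icc_mem_nhdsGE_of_mem ⟨hx.1, hx.2⟩)
    rw [hqdc]
    simpa [hcid x hxK] using h2
  · simp [hqe, hcid]

lemma hasDerivAt_ccos (s : ℂ) (x : ℝ) :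
    HasDerivAt (fun y : ℝ => Complex.cos (s * y)) (-s * Complex.sin (s * x)) x := by
  have h1 : HasDerivAt (fun z : ℂ => Complex.cos (s * z)) (-Complex.sin (s * x) * (s * 1)) (x : ℂ) :=
    (Complex.hasDerivAt_cos _).comp _ ((hasDerivAt_id _).const_mul s)
  have := h1.comp_ofReal
  convert this using 1 <;> ring

lemma hasDerivAt_csin (s : ℂ) (x : ℝ) :
    HasDerivAt (fun y : ℝ => Complex.sin (s * y)) (s * Complex.cos (s * x)) x := by
  have h1 : HasDerivAt (fun z : ℂ => Complex.sin (s * z)) (Complex.cos (s * x) * (s * 1)) (x : ℂ) :=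
    (Complex.hasDerivAt_sin _).comp _ ((hasDerivAt_id _).const_mul s)
  have := h1.comp_ofReal
  convert this using 1 <;> ring

lemma volterra {s : ℂ} {r rd g : ℝ → ℂ}
    (hr : ∀ x, HasDerivAt r (rd x) x)
    (hrd : ∀ x ∈ Set.Icc (0:ℝ) Real.pi, HasDerivAt rd (g x - s^2 * r x) x)
    (hrdcont : ContinuousOn rd (Set.Icc (0:ℝ) Real.pi))
    (hgcont : Continuous g) :
    ∀ x ∈ Set.Icc (0:ℝ) Real.pi, s * r x = s * r 0 * Complex.cos (s*x) + rd 0 * Complex.sin (s*x)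
      + ∫ t in (0:ℝ)..x, Complex.sin (s*(x - t)) * g t := by
  have hrcont : Continuous r := by
    rw [continuous_iff_continuousAt]; exact fun x => (hr x).continuousAt
  set W1 : ℝ → ℂ := fun x => rd x * Complex.cos (s*x) + s * r x * Complex.sin (s*x)
      - ∫ t in (0:ℝ)..x, Complex.cos (s*t) * g t with hW1def
  set W2 : ℝ → ℂ := fun x => rd x * Complex.sin (s*x) - s * r x * Complex.cos (s*x)
      - ∫ t in (0:ℝ)..x, Complex.sin (s*t) * g t with hW2def
  have hgc1 : Continuous (fun t : ℝ => Complex.cos (s*t) * g t) :=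
    ((Complex.continuous_cos.comp (continuous_const.mul Complex.continuous_ofReal))).mul hgcont
  have hgc2 : Continuous (fun t : ℝ => Complex.sin (s*t) * g t) :=
    ((Complex.continuous_sin.comp (continuous_const.mul Complex.continuous_ofReal))).mul hgcont
  have hI1 : ∀ x : ℝ, HasDerivAt (fun u => ∫ t in (0:ℝ)..u, Complex.cos (s*t) * g t)
      (Complex.cos (s*x) * g x) x := fun x =>
    intervalIntegral.integral_hasDerivAt_right (hgc1.intervalIntegrable _ _)
      (hgc1.stronglyMeasurableAtFilter _ _) hgc1.continuousAt
  have hI2 : ∀ x : ℝ, HasDerivAt (fun u => ∫ t in (0:ℝ)..u, Complex.sin (s*t) * g t)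
      (Complex.sin (s*x) * g x) x := fun x =>
    intervalIntegral.integral_hasDerivAt_right (hgc2.intervalIntegrable _ _)
      (hgc2.stronglyMeasurableAtFilter _ _) hgc2.continuousAt
  have hW1deriv : ∀ x ∈ Set.Icc (0:ℝ) Real.pi, HasDerivAt W1 0 x := by
    intro x hx
    have H := (((hrd x hx).mul (hasDerivAt_ccos s x)).add
      (((hr x).const_mul s).mul (hasDerivAt_csin s x))).sub (hI1 x)
    exact H.congr_deriv (by ring)
  have hW2deriv : ∀ x ∈ Set.Icc (0:ℝ) Real.pi, HasDerivAt W2 0 x := by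
    intro x hx
    have H := (((hrd x hx).mul (hasDerivAt_csin s x)).sub
      (((hr x).const_mul s).mul (hasDerivAt_ccos s x))).sub (hI2 x)
    exact H.congr_deriv (by ring)
  have hW1cont : ContinuousOn W1 (Set.Icc 0 Real.pi) := by
    apply ContinuousOn.sub
    · exact (hrdcont.mul (Complex.continuous_cos.comp
        (continuous_const.mul Complex.continuous_ofReal)).continuousOn).add
        ((continuous_const.mul hrcont).continuousOn.mul (Complex.continuous_sin.comp
        (continuous_const.mul Complex.continuous_ofReal)).continuousOn)
    · exact (intervalIntegral.continuous_primitive (fun a b => hgc1.intervalIntegrable a b) 0).continuousOn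
  have hW2cont : ContinuousOn W2 (Set.Icc 0 Real.pi) := by
    apply ContinuousOn.sub
    · exact (hrdcont.mul (Complex.continuous_sin.comp
        (continuous_const.mul Complex.continuous_ofReal)).continuousOn).sub
        ((continuous_const.mul hrcont).continuousOn.mul (Complex.continuous_cos.comp
        (continuous_const.mul Complex.continuous_ofReal)).continuousOn)
    · exact (intervalIntegral.continuous_primitive (fun a b => hgc2.intervalIntegrable a b) 0).continuousOn
  have hW1const : ∀ x ∈ Set.Icc (0:ℝ) Real.pi, W1 x = W1 0 :=
    constant_of_has_deriv_right_zero hW1cont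
      (fun x hx => ((hW1deriv x ⟨hx.1, hx.2.le⟩).hasDerivWithinAt))
  have hW2const : ∀ x ∈ Set.Icc (0:ℝ) Real.pi, W2 x = W2 0 :=
    constant_of_has_deriv_right_zero hW2cont
      (fun x hx => ((hW2deriv x ⟨hx.1, hx.2.le⟩).hasDerivWithinAt))
  have hW10 : W1 0 = rd 0 := by simp [hW1def]
  have hW20 : W2 0 = -(s * r 0) := by simp [hW2def]
  intro x hx
  have e1 := hW1const x hx
  have e2 := hW2const x hx
  rw [hW10] at e1
  rw [hW20] at e2
  -- s * r x = sin(sx) * W1 x - cos(sx) * W2 x + (cos(sx) I2 - sin(sx) I1) form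
  have key : s * r x = Complex.sin (s*x) * (rd x * Complex.cos (s*x) + s * r x * Complex.sin (s*x))
      - Complex.cos (s*x) * (rd x * Complex.sin (s*x) - s * r x * Complex.cos (s*x)) := by
    have pyth : Complex.sin (s*x)^2 + Complex.cos (s*x)^2 = 1 := Complex.sin_sq_add_cos_sq _
    linear_combination (-(s * r x)) * pyth
  have e1' : rd x * Complex.cos (s*x) + s * r x * Complex.sin (s*x)
      = rd 0 + ∫ t in (0:ℝ)..x, Complex.cos (s*t) * g t := by
    have := e1
    simp only [hW1def] at this
    linear_combination this
  have e2' : rd x * Complex.sin (s*x) - s * r x * Complex.cos (s*x)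
      = -(s * r 0) + ∫ t in (0:ℝ)..x, Complex.sin (s*t) * g t := by
    have := e2
    simp only [hW2def] at this
    linear_combination this
  have hIrw : (∫ t in (0:ℝ)..x, Complex.sin (s*(x-t)) * g t)
      = Complex.sin (s*x) * (∫ t in (0:ℝ)..x, Complex.cos (s*t) * g t)
        - Complex.cos (s*x) * (∫ t in (0:ℝ)..x, Complex.sin (s*t) * g t) := by
    rw [← intervalIntegral.integral_const_mul, ← intervalIntegral.integral_const_mul,
        ← intervalIntegral.integral_sub (f := fun t => Complex.sin (s*x) * (Complex.cos (s*t) * g t))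
          (g := fun t => Complex.cos (s*x) * (Complex.sin (s*t) * g t)) ((continuous_const.mul hgc1).intervalIntegrable _ _)
          ((continuous_const.mul hgc2).intervalIntegrable _ _)]
    apply intervalIntegral.integral_congr
    intro t ht
    simp only
    rw [show s * ((x:ℂ) - (t:ℂ)) = s*(x:ℂ) - s*(t:ℂ) by ring, Complex.sin_sub]
    ring
  linear_combination key + Complex.sin (s*(x:ℂ)) * e1' - Complex.cos (s*(x:ℂ)) * e2' - hIrw

lemma gronwall_est {A B : ℝ} (hB : 0 < B) (hA : 0 ≤ A) {u : ℝ → ℝ}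
    (hu : Continuous u) (hpos : ∀ x, 0 ≤ u x)
    (hineq : ∀ x ∈ Set.Icc (0:ℝ) Real.pi, u x ≤ A + B * ∫ t in (0:ℝ)..x, u t) :
    ∀ x ∈ Set.Icc (0:ℝ) Real.pi, u x ≤ A * Real.exp (B * Real.pi) := by
  set U : ℝ → ℝ := fun x => ∫ t in (0:ℝ)..x, u t with hU
  have hUd : ∀ x : ℝ, HasDerivAt U (u x) x := fun x =>
    intervalIntegral.integral_hasDerivAt_right (hu.intervalIntegrable _ _)
      (hu.stronglyMeasurableAtFilter _ _) hu.continuousAt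
  have hUnn : ∀ x ∈ Set.Icc (0:ℝ) Real.pi, 0 ≤ U x := fun x hx =>
    intervalIntegral.integral_nonneg hx.1 (fun t _ => hpos t)
  have key : ∀ x ∈ Set.Icc (0:ℝ) Real.pi, ‖U x‖ ≤ gronwallBound 0 B A (x - 0) := by
    apply norm_le_gronwallBound_of_norm_deriv_right_le
      (f' := u) (fun x hx => (hUd x).continuousAt.continuousWithinAt)
      (fun x hx => (hUd x).hasDerivWithinAt)
    · simp [hU]
    · intro x hx
      have h1 : ‖u x‖ = u x := Real.norm_eq_abs (u x) ▸ _root_.abs_of_nonneg (hpos x)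
      have h2 : ‖U x‖ = U x := Real.norm_eq_abs (U x) ▸ _root_.abs_of_nonneg (hUnn x ⟨hx.1, hx.2.le⟩)
      rw [h1, h2]
      have := hineq x ⟨hx.1, hx.2.le⟩
      linarith
  intro x hx
  have hUb : U x ≤ A / B * (Real.exp (B * x) - 1) := by
    have := key x hx
    rw [gronwallBound_of_K_ne_0 hB.ne'] at this
    rw [Real.norm_eq_abs, _root_.abs_of_nonneg (hUnn x hx)] at this
    simpa using this
  calc u x ≤ A + B * U x := hineq x hx
    _ ≤ A + B * (A / B * (Real.exp (B * x) - 1)) := by nlinarith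
    _ = A * Real.exp (B * x) := by field_simp; ring
    _ ≤ A * Real.exp (B * Real.pi) := by
        apply mul_le_mul_of_nonneg_left _ hA
        exact Real.exp_le_exp.2 (mul_le_mul_of_nonneg_left hx.2 hB.le)

theorem stmt_12 (q : ℝ → ℝ) (hq : ContDiffOn ℝ 1 q (Set.Icc 0 Real.pi))
    (h h₁ h₂ : ℝ) (φ : ℂ → ℝ → ℂ) (φ' : ℂ → ℝ → ℂ)
    (hderiv : ∀ lam : ℂ, ∀ x : ℝ, HasDerivAt (φ lam) (φ' lam x) x)
    (hderiv' : ∀ lam : ℂ, ∀ x : ℝ,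
      HasDerivAt (φ' lam) ((q x : ℂ) * φ lam x - lam * φ lam x) x)
    (hinit0 : ∀ lam : ℂ, φ lam 0 = (h₁ : ℂ) - lam)
    (hinit1 : ∀ lam : ℂ, φ' lam 0 = (h₂ : ℂ) - lam * h) :
    ∃ C R : ℝ, 0 < C ∧ 0 < R ∧ ∀ s : ℂ, R ≤ ‖s‖ →
      ∀ x ∈ Set.Icc (0 : ℝ) Real.pi,
        ‖φ (s ^ 2) x
            + s ^ 2 * Complex.cos (s * x)
            + (((h : ℂ) + (1 / 2 : ℂ) * ((∫ t in (0 : ℝ)..x, q t : ℝ) : ℂ))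
                * s * Complex.sin (s * x))‖
          ≤ C * Real.exp (|s.im| * x) := by
  obtain ⟨qe, qd, hqdcont, hqederiv, hqeq⟩ := ext_lemma q hq
  have hqecont : Continuous qe := continuous_iff_continuousAt.2 fun x => (hqederiv x).continuousAt
  set Q : ℝ → ℝ := fun x => ∫ t in (0:ℝ)..x, qe t with hQdef
  have hQderiv : ∀ x, HasDerivAt Q (qe x) x := primitive_hasDerivAt_real hqecont
  have hQcont : Continuous Q := continuous_iff_continuousAt.2 fun x => (hQderiv x).continuousAt
  -- bound B
  obtain ⟨B0, hB0⟩ := isCompact_Icc.exists_bound_of_continuousOn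
    (f := fun x => (|qe x| + |qd x / 2 - qe x * (h + Q x / 2)| : ℝ))
    (((hqecont.abs).add ((hqdcont.div_const 2).sub
      (hqecont.mul ((continuous_const.add (hQcont.div_const 2))))).abs).continuousOn)
  set B : ℝ := max B0 1 with hBdef
  have hB : 0 < B := lt_of_lt_of_le one_pos (le_max_right _ _)
  have hbqe : ∀ x ∈ Set.Icc (0:ℝ) Real.pi, |qe x| ≤ B := by
    intro x hx
    have := hB0 x hx
    rw [Real.norm_eq_abs, _root_.abs_of_nonneg (by positivity)] at this
    have h2 : (0:ℝ) ≤ |qd x / 2 - qe x * (h + Q x / 2)| := abs_nonneg _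
    calc |qe x| ≤ B0 := by linarith
      _ ≤ B := le_max_left _ _
  have hbf : ∀ x ∈ Set.Icc (0:ℝ) Real.pi, |qd x / 2 - qe x * (h + Q x / 2)| ≤ B := by
    intro x hx
    have := hB0 x hx
    rw [Real.norm_eq_abs, _root_.abs_of_nonneg (by positivity)] at this
    have h2 : (0:ℝ) ≤ |qe x| := abs_nonneg _
    calc |qd x / 2 - qe x * (h + Q x / 2)| ≤ B0 := by linarith
      _ ≤ B := le_max_left _ _
  set A : ℝ := |h₁| + |h₂| + B * Real.pi with hAdef
  have hApos : 0 < A := by positivity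
  refine ⟨A * Real.exp (B * Real.pi), 1, by positivity, one_pos, ?_⟩
  intro s hs
  have hS1 : (1:ℝ) ≤ ‖s‖ := hs
  have hS0 : (0:ℝ) < ‖s‖ := lt_of_lt_of_le one_pos hS1
  set τ : ℝ := |s.im| with hτdef
  have hτ : 0 ≤ τ := abs_nonneg _
  -- definitions
  set r : ℝ → ℂ := fun y => φ (s^2) y + s^2 * Complex.cos (s*y)
      + ((h:ℂ) + ((Q y : ℝ):ℂ)/2) * s * Complex.sin (s*y) with hrdef
  set rd : ℝ → ℂ := fun y => φ' (s^2) y - s^3 * Complex.sin (s*y)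
      + ((qe y : ℝ):ℂ)/2 * s * Complex.sin (s*y)
      + ((h:ℂ) + ((Q y : ℝ):ℂ)/2) * s^2 * Complex.cos (s*y) with hrddef
  set f : ℝ → ℂ := fun y => s * Complex.sin (s*y)
      * ((qd y / 2 - qe y * (h + Q y / 2) : ℝ) : ℂ) with hfdef
  set g : ℝ → ℂ := fun y => ((qe y : ℝ):ℂ) * r y + f y with hgdef
  have hQC : ∀ y : ℝ, HasDerivAt (fun t : ℝ => ((Q t : ℝ) : ℂ)) ((qe y : ℝ) : ℂ) y :=
    fun y => (hQderiv y).ofReal_comp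
  have hqeC : ∀ y : ℝ, HasDerivAt (fun t : ℝ => ((qe t : ℝ) : ℂ)) ((qd y : ℝ) : ℂ) y :=
    fun y => (hqederiv y).ofReal_comp
  have hr : ∀ y, HasDerivAt r (rd y) y := by
    intro y
    have H := ((hderiv (s^2) y).add ((hasDerivAt_ccos s y).const_mul (s^2))).add
      (((((hQC y).div_const 2).const_add (h:ℂ)).mul_const s).mul (hasDerivAt_csin s y))
    simp only [hrdef, hrddef]
    exact H.congr_deriv (by ring)
  have hrcont : Continuous r := continuous_iff_continuousAt.2 fun y => (hr y).continuousAt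
  have hrdcont : Continuous rd := by
    have hφ' : Continuous (φ' (s^2)) :=
      continuous_iff_continuousAt.2 fun y => (hderiv' (s^2) y).continuousAt
    rw [hrddef]
    fun_prop
  have hgcont : Continuous g := by
    rw [hgdef, hfdef]
    fun_prop
  have hrd : ∀ y ∈ Set.Icc (0:ℝ) Real.pi, HasDerivAt rd (g y - s^2 * r y) y := by
    intro y hy
    have H := (((hderiv' (s^2) y).sub ((hasDerivAt_csin s y).const_mul (s^3))).add
      ((((hqeC y).div_const 2).mul_const s).mul (hasDerivAt_csin s y))).add
      (((((hQC y).div_const 2).const_add (h:ℂ)).mul_const (s^2)).mul (hasDerivAt_ccos s y))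
    simp only [hrddef]
    refine H.congr_deriv ?_
    simp only [hgdef, hfdef, hrdef, hqeq y hy]
    push_cast
    ring
  -- representation
  have hrep := volterra hr (fun y hy => hrd y hy) hrdcont.continuousOn hgcont
  have hr0 : r 0 = (h₁ : ℂ) := by
    rw [hrdef]
    simp [hinit0, hQdef]
  have hrd0 : rd 0 = (h₂ : ℂ) := by
    rw [hrddef]
    simp [hinit1, hQdef]
    ring
  -- the comparison function
  set u : ℝ → ℝ := fun y => ‖r y‖ * Real.exp (-(τ * y)) with hudef
  have hucont : Continuous u := by
    rw [hudef]
    exact (continuous_norm.comp hrcont).mul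
      (Real.continuous_exp.comp ((continuous_const.mul continuous_id).neg))
  have hupos : ∀ y, 0 ≤ u y := fun y => by positivity
  have him : ∀ y : ℝ, (s * (y:ℂ)).im = s.im * y := by
    intro y
    simp [Complex.mul_im]
  have habs_sin : ∀ y : ℝ, 0 ≤ y → ‖Complex.sin (s * y)‖ ≤ Real.exp (τ * y) := by
    intro y hy
    have := abs_sin_le' (s * y)
    rwa [him, abs_mul, _root_.abs_of_nonneg hy] at this
  have habs_cos : ∀ y : ℝ, 0 ≤ y → ‖Complex.cos (s * y)‖ ≤ Real.exp (τ * y) := by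
    intro y hy
    have := abs_cos_le' (s * y)
    rwa [him, abs_mul, _root_.abs_of_nonneg hy] at this
  -- Volterra estimate: u y ≤ A + B ∫ u
  have hineq : ∀ y ∈ Set.Icc (0:ℝ) Real.pi, u y ≤ A + B * ∫ t in (0:ℝ)..y, u t := by
    intro y hy
    set I : ℝ := ∫ t in (0:ℝ)..y, u t with hIdef
    have hInn : 0 ≤ I := intervalIntegral.integral_nonneg hy.1 (fun t _ => hupos t)
    set E : ℝ := Real.exp (τ * y) with hEdef
    have hE : 0 < E := Real.exp_pos _
    -- bound the integral term
    have hgb : ∀ t, t ∈ Set.Icc (0:ℝ) y → ‖Complex.sin (s*((y:ℝ)-t)) * g t‖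
        ≤ E * (B * u t + B * ‖s‖) := by
      intro t ht
      have htK : t ∈ Set.Icc (0:ℝ) Real.pi := ⟨ht.1, ht.2.trans hy.2⟩
      have h1 : ‖Complex.sin (s*((y:ℝ)-t))‖ ≤ Real.exp (τ * (y - t)) := by
        have := abs_sin_le' (s * ((y:ℝ) - t))
        have him2 : (s * ((y:ℝ) - (t:ℝ))).im = s.im * (y - t) := by
          simp [Complex.mul_im]
        rw [him2, abs_mul, _root_.abs_of_nonneg (by linarith [ht.1, ht.2] : (0:ℝ) ≤ y - t)] at this
        exact this
      have h2 : ‖g t‖ ≤ B * ‖r t‖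
          + B * ‖s‖ * Real.exp (τ * t) := by
        rw [hgdef]
        simp only
        calc ‖((qe t : ℝ):ℂ) * r t + f t‖
            ≤ ‖((qe t : ℝ):ℂ) * r t‖ + ‖f t‖ := by
              simpa using norm_add_le (((qe t : ℝ):ℂ) * r t) (f t)
          _ ≤ B * ‖r t‖ + B * ‖s‖ * Real.exp (τ * t) := by
              apply add_le_add
              · rw [norm_mul, Complex.norm_real, Real.norm_eq_abs]
                exact mul_le_mul_of_nonneg_right (hbqe t htK) (norm_nonneg _)
              · rw [hfdef]
                simp only [norm_mul, Complex.norm_real, Real.norm_eq_abs]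
                calc ‖s‖ * ‖Complex.sin (s*t)‖ * |qd t / 2 - qe t * (h + Q t / 2)|
                    ≤ ‖s‖ * Real.exp (τ*t) * B := by
                      apply mul_le_mul (mul_le_mul_of_nonneg_left (habs_sin t ht.1)
                        (norm_nonneg _)) (hbf t htK) (abs_nonneg _) (by positivity)
                  _ = B * ‖s‖ * Real.exp (τ * t) := by ring
      calc ‖Complex.sin (s*((y:ℝ)-t)) * g t‖
          = ‖Complex.sin (s*((y:ℝ)-t))‖ * ‖g t‖ := norm_mul _ _
        _ ≤ Real.exp (τ * (y - t)) * (B * ‖r t‖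
            + B * ‖s‖ * Real.exp (τ * t)) :=
            mul_le_mul h1 h2 (norm_nonneg _) (Real.exp_nonneg _)
        _ = E * (B * u t + B * ‖s‖) := by
            simp only [hudef, hEdef]
            rw [show τ * y = τ * (y - t) + τ * t by ring, Real.exp_add, Real.exp_neg]
            have h3 : Real.exp (τ * t) ≠ 0 := (Real.exp_pos _).ne'
            field_simp
    have hIbound : ‖∫ t in (0:ℝ)..y, Complex.sin (s*((y:ℝ)-t)) * g t‖
        ≤ E * (B * I + B * ‖s‖ * y) := by
      have hcont1 : Continuous (fun t : ℝ => Complex.sin (s*((y:ℝ)-t)) * g t) := by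
        fun_prop
      calc ‖∫ t in (0:ℝ)..y, Complex.sin (s*((y:ℝ)-t)) * g t‖
          ≤ ∫ t in (0:ℝ)..y, ‖Complex.sin (s*((y:ℝ)-t)) * g t‖ := by
            simpa using
              intervalIntegral.norm_integral_le_integral_norm
                (f := fun t : ℝ => Complex.sin (s*((y:ℝ)-t)) * g t) hy.1
        _ ≤ ∫ t in (0:ℝ)..y, E * (B * u t + B * ‖s‖) := by
            apply intervalIntegral.integral_mono_on hy.1
              ((continuous_norm.comp hcont1).intervalIntegrable _ _)
              ((continuous_const.mul ((continuous_const.mul hucont).add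
                continuous_const)).intervalIntegrable _ _) hgb
        _ = E * (B * I + B * ‖s‖ * y) := by
            rw [intervalIntegral.integral_const_mul,
              intervalIntegral.integral_add (f := fun t => B * u t) (g := fun _ => B * ‖s‖) ((continuous_const.mul hucont).intervalIntegrable _ _)
                intervalIntegrable_const,
              intervalIntegral.integral_const_mul, intervalIntegral.integral_const]
            simp only [smul_eq_mul, sub_zero]
            ring
    -- assemble
    have hmain : ‖s‖ * ‖r y‖
        ≤ ‖s‖ * |h₁| * E + |h₂| * E + E * (B * I + B * ‖s‖ * y) := by
      have := hrep y hy
      calc ‖s‖ * ‖r y‖ = ‖s * r y‖ := (norm_mul _ _).symm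
        _ = ‖s * r 0 * Complex.cos (s*y) + rd 0 * Complex.sin (s*y)
            + ∫ t in (0:ℝ)..y, Complex.sin (s*((y:ℝ)-t)) * g t‖ := by rw [this]
        _ ≤ ‖s * r 0 * Complex.cos (s*y)‖ + ‖rd 0 * Complex.sin (s*y)‖
            + ‖∫ t in (0:ℝ)..y, Complex.sin (s*((y:ℝ)-t)) * g t‖ := by
            have t1 := norm_add_le
              (s * r 0 * Complex.cos (s*(y:ℂ)) + rd 0 * Complex.sin (s*(y:ℂ)))
              (∫ t in (0:ℝ)..y, Complex.sin (s*((y:ℝ)-t)) * g t)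
            have t2 := norm_add_le (s * r 0 * Complex.cos (s*(y:ℂ)))
              (rd 0 * Complex.sin (s*(y:ℂ)))
            linarith
        _ ≤ ‖s‖ * |h₁| * E + |h₂| * E + E * (B * I + B * ‖s‖ * y) := by
            refine add_le_add (add_le_add ?_ ?_) hIbound
            · rw [hr0, norm_mul, norm_mul, Complex.norm_real, Real.norm_eq_abs]
              exact mul_le_mul_of_nonneg_left (habs_cos y hy.1)
                (by positivity)
            · rw [hrd0, norm_mul, Complex.norm_real, Real.norm_eq_abs]
              exact mul_le_mul_of_nonneg_left (habs_sin y hy.1) (abs_nonneg _)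
    -- divide by |s| and e^{τ y}
    have hry : ‖r y‖ ≤ (A + B * I) * E := by
      have hstep : ‖s‖ * ‖r y‖
          ≤ ‖s‖ * ((A + B * I) * E) := by
        have hy2 := hy.2
        have hh2 : |h₂| ≤ ‖s‖ * |h₂| := le_mul_of_one_le_left (abs_nonneg _) hS1
        have hBI : B * I ≤ ‖s‖ * (B * I) := le_mul_of_one_le_left (by positivity) hS1
        have hyp : B * ‖s‖ * y ≤ ‖s‖ * (B * Real.pi) := by
          calc B * ‖s‖ * y ≤ B * ‖s‖ * Real.pi :=
                mul_le_mul_of_nonneg_left hy2 (by positivity)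
            _ = ‖s‖ * (B * Real.pi) := by ring
        calc ‖s‖ * ‖r y‖
            ≤ ‖s‖ * |h₁| * E + |h₂| * E + E * (B * I + B * ‖s‖ * y) := hmain
          _ ≤ ‖s‖ * |h₁| * E + ‖s‖ * |h₂| * E
              + E * (‖s‖ * (B * I) + ‖s‖ * (B * Real.pi)) := by
              refine add_le_add (add_le_add le_rfl
                (mul_le_mul_of_nonneg_right hh2 hE.le)) ?_
              exact mul_le_mul_of_nonneg_left (add_le_add hBI hyp) hE.le
          _ = ‖s‖ * ((A + B * I) * E) := by rw [hAdef]; ring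
      exact le_of_mul_le_mul_left hstep hS0
    simp only [hudef, Real.exp_neg]
    rw [hEdef] at hry
    calc ‖r y‖ * (Real.exp (τ * y))⁻¹
        ≤ ((A + B * I) * Real.exp (τ * y)) * (Real.exp (τ * y))⁻¹ :=
          mul_le_mul_of_nonneg_right hry (by positivity)
      _ = A + B * I := by field_simp
  -- Gronwall
  have hfinal := gronwall_est hB hApos.le hucont hupos hineq
  intro x hx
  have hux := hfinal x hx
  -- identify goal expression with r x
  have hint : (∫ t in (0:ℝ)..x, q t) = Q x := by
    rw [hQdef]
    apply intervalIntegral.integral_congr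
    intro t ht
    rw [Set.uIcc_of_le hx.1] at ht
    exact (hqeq t ⟨ht.1, ht.2.trans hx.2⟩).symm
  have hexpr : φ (s ^ 2) x + s ^ 2 * Complex.cos (s * x)
      + (((h : ℂ) + (1 / 2 : ℂ) * ((∫ t in (0 : ℝ)..x, q t : ℝ) : ℂ)) * s * Complex.sin (s * x))
      = r x := by
    simp only [hrdef]
    rw [hint]
    ring
  rw [hexpr]
  -- conclude
  have : ‖r x‖ = u x * Real.exp (τ * x) := by
    simp only [hudef, Real.exp_neg]
    field_simp
  rw [this]
  calc u x * Real.exp (τ * x) ≤ (A * Real.exp (B * Real.pi)) * Real.exp (τ * x) :=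
      mul_le_mul_of_nonneg_right hux (Real.exp_nonneg _)
    _ = A * Real.exp (B * Real.pi) * Real.exp (|s.im| * x) := by rw [hτdef]
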